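/- Fix n ≥ 1 and a symmetric matrix C_e ∈ ℝ^{n×n}. For all orthogonal matrices M and N, ‖M·Ω(M) − N·Ω(N)‖_F ≤ (2√n + 8)·‖C_e‖₂²·‖M − N‖_F, where Ω(M) := A(M)D(M) − D(M)A(M) with A(M) = Mᵀ C_e M and D(M) = diag(A(M)). That is, the Riemannian gradient map M ↦ −M Ω(M) of the diagonalization objective is Lipschitz on the orthogonal group with constant c_n ‖C_e‖₂², c_n = 2√n + 8. -/

import Mathlib

open Matrix

/-- The diagonal matrix whose diagonal agrees with `X`. -/
noncomputable def diagPart {n : ℕ} (X : Matrix (Fin n) (Fin n) ℝ) :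
    Matrix (Fin n) (Fin n) ℝ :=
  Matrix.diagonal (fun i => X i i)

/-- Frobenius norm of a real square matrix. -/
noncomputable def frobNorm {n : ℕ} (X : Matrix (Fin n) (Fin n) ℝ) : ℝ :=
  Real.sqrt (∑ i, ∑ j, (X i j) ^ 2)

/-- Spectral (ℓ²-operator) norm of a real square matrix. -/
noncomputable def specNorm {n : ℕ} (X : Matrix (Fin n) (Fin n) ℝ) : ℝ :=
  ‖LinearMap.toContinuousLinearMap (Matrix.toEuclideanLin X)‖

/-- Rotated covariance `A(M) = Mᵀ C_e M`. -/
noncomputable def rotA {n : ℕ} (Ce M : Matrix (Fin n) (Fin n) ℝ) :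
    Matrix (Fin n) (Fin n) ℝ := Mᵀ * Ce * M

/-- The commutator generator `Ω(M) = A D − D A`. -/
noncomputable def genOmega {n : ℕ} (Ce M : Matrix (Fin n) (Fin n) ℝ) :
    Matrix (Fin n) (Fin n) ℝ :=
  rotA Ce M * diagPart (rotA Ce M) - diagPart (rotA Ce M) * rotA Ce M

namespace RGLip

variable {n : ℕ}

/-! ### basic facts about the l2 norm on Euclidean space -/

lemma eucl_norm_apply (x : EuclideanSpace ℝ (Fin n)) :
    ‖x‖ = Real.sqrt (∑ i, (x i) ^ 2) := by
  rw [EuclideanSpace.norm_eq]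
  exact congrArg Real.sqrt (Finset.sum_congr rfl fun i _ => by
    rw [Real.norm_eq_abs, sq_abs])

/-! ### specNorm lemmas not requiring the matrix norm instance -/

lemma specNorm_nonneg (X : Matrix (Fin n) (Fin n) ℝ) : 0 ≤ specNorm X :=
  norm_nonneg _

lemma specNorm_sub_le (X Y : Matrix (Fin n) (Fin n) ℝ) :
    specNorm (X - Y) ≤ specNorm X + specNorm Y := by
  unfold specNorm
  rw [map_sub, map_sub]
  exact norm_sub_le _ _

lemma specNorm_mulVec_le (X : Matrix (Fin n) (Fin n) ℝ) (v : Fin n → ℝ) :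
    Real.sqrt (∑ i, ((X *ᵥ v) i) ^ 2) ≤ specNorm X * Real.sqrt (∑ i, (v i) ^ 2) := by
  have h := (LinearMap.toContinuousLinearMap (Matrix.toEuclideanLin X)).le_opNorm
    ((WithLp.equiv 2 (Fin n → ℝ)).symm v)
  rw [eucl_norm_apply, eucl_norm_apply] at h
  exact h

lemma specNorm_le_bound {X : Matrix (Fin n) (Fin n) ℝ} {c : ℝ} (hc : 0 ≤ c)
    (h : ∀ v : Fin n → ℝ,
      Real.sqrt (∑ i, ((X *ᵥ v) i) ^ 2) ≤ c * Real.sqrt (∑ i, (v i) ^ 2)) :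
    specNorm X ≤ c := by
  apply ContinuousLinearMap.opNorm_le_bound _ hc
  intro x
  rw [eucl_norm_apply, eucl_norm_apply]
  exact h (fun i => x i)

lemma abs_diag_le_specNorm (X : Matrix (Fin n) (Fin n) ℝ) (i : Fin n) :
    |X i i| ≤ specNorm X := by
  have h := specNorm_mulVec_le X (Pi.single i 1)
  rw [mulVec_single] at h
  simp only [MulOpposite.op_one, one_smul, Matrix.col_apply] at h
  have h1 : ∑ j, (Pi.single (M := fun _ => ℝ) i 1 j) ^ 2 = 1 := by
    simp [Pi.single_apply, sq]
  rw [h1, Real.sqrt_one, mul_one] at h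
  calc |X i i| = Real.sqrt ((X i i) ^ 2) := (Real.sqrt_sq_eq_abs _).symm
    _ ≤ Real.sqrt (∑ k, (X k i) ^ 2) := Real.sqrt_le_sqrt
        (Finset.single_le_sum (f := fun k => (X k i) ^ 2)
          (fun k _ => sq_nonneg _) (Finset.mem_univ i))
    _ ≤ specNorm X := h

lemma specNorm_diagPart_le (X : Matrix (Fin n) (Fin n) ℝ) :
    specNorm (diagPart X) ≤ specNorm X := by
  apply specNorm_le_bound (specNorm_nonneg X)
  intro v
  have hb : ∑ i, (X i i * v i) ^ 2 ≤ specNorm X ^ 2 * ∑ i, (v i) ^ 2 := by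
    rw [Finset.mul_sum]
    apply Finset.sum_le_sum
    intro i _
    have h1 := abs_diag_le_specNorm X i
    have h2 : (X i i) ^ 2 ≤ specNorm X ^ 2 := by
      nlinarith [abs_nonneg (X i i), sq_abs (X i i)]
    calc (X i i * v i) ^ 2 = (X i i) ^ 2 * (v i) ^ 2 := by ring
      _ ≤ specNorm X ^ 2 * (v i) ^ 2 := mul_le_mul_of_nonneg_right h2 (sq_nonneg _)
  calc Real.sqrt (∑ i, ((diagPart X *ᵥ v) i) ^ 2)
      = Real.sqrt (∑ i, (X i i * v i) ^ 2) := by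
        simp [diagPart, mulVec_diagonal]
    _ ≤ Real.sqrt (specNorm X ^ 2 * ∑ i, (v i) ^ 2) := Real.sqrt_le_sqrt hb
    _ = specNorm X * Real.sqrt (∑ i, (v i) ^ 2) := by
        rw [Real.sqrt_mul (sq_nonneg _), Real.sqrt_sq (specNorm_nonneg X)]

/-! ### specNorm lemmas using the scoped L2 operator norm instance -/

section L2
open scoped Matrix.Norms.L2Operator

lemma specNorm_eq (X : Matrix (Fin n) (Fin n) ℝ) : specNorm X = ‖X‖ := rfl

lemma specNorm_mul_le (X Y : Matrix (Fin n) (Fin n) ℝ) :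
    specNorm (X * Y) ≤ specNorm X * specNorm Y := by
  simp only [specNorm_eq]
  exact Matrix.l2_opNorm_mul X Y

lemma specNorm_transpose (X : Matrix (Fin n) (Fin n) ℝ) :
    specNorm Xᵀ = specNorm X := by
  simp only [specNorm_eq]
  rw [← Matrix.conjTranspose_eq_transpose_of_trivial]
  exact Matrix.l2_opNorm_conjTranspose X

lemma specNorm_one_le : specNorm (1 : Matrix (Fin n) (Fin n) ℝ) ≤ 1 := by
  rw [specNorm_eq, Matrix.cstar_norm_def, _root_.map_one]
  exact ContinuousLinearMap.norm_id_le

lemma specNorm_orth_le (M : Matrix (Fin n) (Fin n) ℝ) (hM : Mᵀ * M = 1) :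
    specNorm M ≤ 1 := by
  have h := Matrix.l2_opNorm_conjTranspose_mul_self (𝕜 := ℝ) M
  rw [Matrix.conjTranspose_eq_transpose_of_trivial, hM] at h
  have h1 : specNorm M * specNorm M ≤ 1 := by
    rw [specNorm_eq, ← h]
    exact specNorm_one_le
  nlinarith [specNorm_nonneg M]

end L2

/-! ### frobNorm lemmas -/

lemma frobNorm_nonneg (X : Matrix (Fin n) (Fin n) ℝ) : 0 ≤ frobNorm X :=
  Real.sqrt_nonneg _

lemma sq_frobNorm (X : Matrix (Fin n) (Fin n) ℝ) :
    frobNorm X ^ 2 = ∑ i, ∑ j, (X i j) ^ 2 :=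
  Real.sq_sqrt (by positivity)

lemma frobNorm_le_of_sq {X : Matrix (Fin n) (Fin n) ℝ} {c : ℝ} (hc : 0 ≤ c)
    (h : ∑ i, ∑ j, (X i j) ^ 2 ≤ c ^ 2) : frobNorm X ≤ c := by
  rw [frobNorm]
  calc Real.sqrt (∑ i, ∑ j, (X i j) ^ 2) ≤ Real.sqrt (c ^ 2) := Real.sqrt_le_sqrt h
    _ = c := Real.sqrt_sq hc

lemma frobNorm_transpose (X : Matrix (Fin n) (Fin n) ℝ) :
    frobNorm Xᵀ = frobNorm X := by
  simp only [frobNorm, transpose_apply]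
  rw [Finset.sum_comm]

lemma frob_mul_le_left (X Y : Matrix (Fin n) (Fin n) ℝ) :
    frobNorm (X * Y) ≤ specNorm X * frobNorm Y := by
  apply frobNorm_le_of_sq (mul_nonneg (specNorm_nonneg X) (frobNorm_nonneg Y))
  rw [mul_pow, sq_frobNorm, Finset.sum_comm (s := Finset.univ) (t := Finset.univ)
    (f := fun i j => ((X * Y) i j) ^ 2), Finset.sum_comm (s := Finset.univ) (t := Finset.univ)
    (f := fun i j => (Y i j) ^ 2), Finset.mul_sum]
  apply Finset.sum_le_sum
  intro j _
  have h := specNorm_mulVec_le X (fun k => Y k j)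
  have hle : ∑ i, ((X * Y) i j) ^ 2 ≤ (specNorm X * Real.sqrt (∑ i, (Y i j) ^ 2)) ^ 2 := by
    have h0 : (0 : ℝ) ≤ ∑ i, ((X * Y) i j) ^ 2 := by positivity
    have hrw : ∀ i, (X * Y) i j = (X *ᵥ fun k => Y k j) i := by
      intro i
      simp [Matrix.mul_apply, Matrix.mulVec, dotProduct]
    calc ∑ i, ((X * Y) i j) ^ 2
        = Real.sqrt (∑ i, ((X * Y) i j) ^ 2) ^ 2 := (Real.sq_sqrt h0).symm
      _ ≤ (specNorm X * Real.sqrt (∑ i, (Y i j) ^ 2)) ^ 2 := by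
          apply pow_le_pow_left₀ (Real.sqrt_nonneg _)
          simp only [hrw]
          exact h
  rw [mul_pow, Real.sq_sqrt (by positivity : (0:ℝ) ≤ ∑ i, (Y i j) ^ 2)] at hle
  exact hle

lemma frob_mul_le_right (X Y : Matrix (Fin n) (Fin n) ℝ) :
    frobNorm (X * Y) ≤ frobNorm X * specNorm Y := by
  calc frobNorm (X * Y) = frobNorm ((X * Y)ᵀ) := (frobNorm_transpose _).symm
    _ = frobNorm (Yᵀ * Xᵀ) := by rw [transpose_mul]
    _ ≤ specNorm Yᵀ * frobNorm Xᵀ := frob_mul_le_left _ _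
    _ = frobNorm X * specNorm Y := by
        rw [specNorm_transpose, frobNorm_transpose]; ring

lemma frobNorm_diagPart_le (X : Matrix (Fin n) (Fin n) ℝ) :
    frobNorm (diagPart X) ≤ frobNorm X := by
  apply Real.sqrt_le_sqrt
  apply Finset.sum_le_sum
  intro i _
  have h1 : ∑ j, (diagPart X i j) ^ 2 = (X i i) ^ 2 := by
    simp [diagPart, Matrix.diagonal_apply, apply_ite (· ^ 2)]
  rw [h1]
  exact Finset.single_le_sum (f := fun j => (X i j) ^ 2)
    (fun j _ => sq_nonneg _) (Finset.mem_univ i)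

section Frob
attribute [local instance] Matrix.frobeniusNormedAddCommGroup

lemma frobNorm_eq_norm (X : Matrix (Fin n) (Fin n) ℝ) : frobNorm X = ‖X‖ := by
  rw [Matrix.frobenius_norm_def, frobNorm, Real.sqrt_eq_rpow]
  congr 1
  apply Finset.sum_congr rfl
  intro i _
  apply Finset.sum_congr rfl
  intro j _
  rw [Real.rpow_two, Real.norm_eq_abs]
  exact (sq_abs _).symm

lemma frobNorm_add_le (X Y : Matrix (Fin n) (Fin n) ℝ) :
    frobNorm (X + Y) ≤ frobNorm X + frobNorm Y := by
  simp only [frobNorm_eq_norm]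
  exact norm_add_le X Y

lemma frobNorm_sub_le (X Y : Matrix (Fin n) (Fin n) ℝ) :
    frobNorm (X - Y) ≤ frobNorm X + frobNorm Y := by
  simp only [frobNorm_eq_norm]
  exact norm_sub_le X Y

end Frob

end RGLip

open RGLip

/-- **Lipschitz bound for the Riemannian gradient map**: for orthogonal `M, N`,
`‖M Ω(M) − N Ω(N)‖_F ≤ (2√n + 8) ‖C_e‖₂² ‖M − N‖_F`. -/
theorem riemannian_gradient_lipschitz {n : ℕ} (hn : 1 ≤ n)
    (Ce M N : Matrix (Fin n) (Fin n) ℝ) (hCe : Ceᵀ = Ce)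
    (hM : Mᵀ * M = 1) (hN : Nᵀ * N = 1) :
    frobNorm (M * genOmega Ce M - N * genOmega Ce N)
      ≤ (2 * Real.sqrt n + 8) * specNorm Ce ^ 2 * frobNorm (M - N) := by
  set s := specNorm Ce with hs
  have hs0 : 0 ≤ s := specNorm_nonneg Ce
  set A := rotA Ce M with hA
  set B := rotA Ce N with hB
  set D := diagPart A with hD
  set E := diagPart B with hE
  set fMN := frobNorm (M - N) with hfMN
  have hfMN0 : 0 ≤ fMN := frobNorm_nonneg _
  -- orthogonality consequences
  have hMt : (Mᵀ)ᵀ * Mᵀ = 1 := by rw [transpose_transpose, mul_eq_one_comm]; exact hM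
  have hNt : (Nᵀ)ᵀ * Nᵀ = 1 := by rw [transpose_transpose, mul_eq_one_comm]; exact hN
  have hsM : specNorm M ≤ 1 := specNorm_orth_le M hM
  have hsN : specNorm N ≤ 1 := specNorm_orth_le N hN
  have hsMt : specNorm Mᵀ ≤ 1 := specNorm_orth_le Mᵀ hMt
  have hsNt : specNorm Nᵀ ≤ 1 := specNorm_orth_le Nᵀ hNt
  -- spectral norm of rotated covariances
  have hsA : specNorm A ≤ s := by
    calc specNorm A ≤ specNorm (Mᵀ * Ce) * specNorm M := specNorm_mul_le _ _
      _ ≤ specNorm (Mᵀ * Ce) * 1 :=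
          mul_le_mul_of_nonneg_left hsM (specNorm_nonneg _)
      _ = specNorm (Mᵀ * Ce) := mul_one _
      _ ≤ specNorm Mᵀ * s := specNorm_mul_le _ _
      _ ≤ 1 * s := mul_le_mul_of_nonneg_right hsMt hs0
      _ = s := one_mul _
  have hsB : specNorm B ≤ s := by
    calc specNorm B ≤ specNorm (Nᵀ * Ce) * specNorm N := specNorm_mul_le _ _
      _ ≤ specNorm (Nᵀ * Ce) * 1 :=
          mul_le_mul_of_nonneg_left hsN (specNorm_nonneg _)
      _ = specNorm (Nᵀ * Ce) := mul_one _
      _ ≤ specNorm Nᵀ * s := specNorm_mul_le _ _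
      _ ≤ 1 * s := mul_le_mul_of_nonneg_right hsNt hs0
      _ = s := one_mul _
  have hsD : specNorm D ≤ s := le_trans (specNorm_diagPart_le A) hsA
  have hsE : specNorm E ≤ s := le_trans (specNorm_diagPart_le B) hsB
  -- spectral norm of Omega M
  have hsOm : specNorm (genOmega Ce M) ≤ 2 * s ^ 2 := by
    have h1 : specNorm (A * D) ≤ s * s := by
      calc specNorm (A * D) ≤ specNorm A * specNorm D := specNorm_mul_le _ _
        _ ≤ s * s := mul_le_mul hsA hsD (specNorm_nonneg _) hs0
    have h2 : specNorm (D * A) ≤ s * s := by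
      calc specNorm (D * A) ≤ specNorm D * specNorm A := specNorm_mul_le _ _
        _ ≤ s * s := mul_le_mul hsD hsA (specNorm_nonneg _) hs0
    calc specNorm (genOmega Ce M) ≤ specNorm (A * D) + specNorm (D * A) :=
          specNorm_sub_le _ _
      _ ≤ s * s + s * s := add_le_add h1 h2
      _ = 2 * s ^ 2 := by ring
  -- Frobenius bound on A - B
  have hfAB : frobNorm (A - B) ≤ 2 * s * fMN := by
    have hdecomp : A - B = (M - N)ᵀ * (Ce * M) + Nᵀ * (Ce * (M - N)) := by
      rw [hA, hB, rotA, rotA, transpose_sub]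
      noncomm_ring
    have hCeM : specNorm (Ce * M) ≤ s := by
      calc specNorm (Ce * M) ≤ s * specNorm M := specNorm_mul_le _ _
        _ ≤ s * 1 := mul_le_mul_of_nonneg_left hsM hs0
        _ = s := mul_one _
    have ht1 : frobNorm ((M - N)ᵀ * (Ce * M)) ≤ fMN * s := by
      calc frobNorm ((M - N)ᵀ * (Ce * M))
          ≤ frobNorm ((M - N)ᵀ) * specNorm (Ce * M) := frob_mul_le_right _ _
        _ = fMN * specNorm (Ce * M) := by rw [frobNorm_transpose]
        _ ≤ fMN * s := mul_le_mul_of_nonneg_left hCeM hfMN0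
    have ht2 : frobNorm (Nᵀ * (Ce * (M - N))) ≤ s * fMN := by
      calc frobNorm (Nᵀ * (Ce * (M - N)))
          ≤ specNorm Nᵀ * frobNorm (Ce * (M - N)) := frob_mul_le_left _ _
        _ ≤ 1 * frobNorm (Ce * (M - N)) :=
            mul_le_mul_of_nonneg_right hsNt (frobNorm_nonneg _)
        _ = frobNorm (Ce * (M - N)) := one_mul _
        _ ≤ s * fMN := frob_mul_le_left _ _
    calc frobNorm (A - B)
        ≤ frobNorm ((M - N)ᵀ * (Ce * M)) + frobNorm (Nᵀ * (Ce * (M - N))) := by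
          rw [hdecomp]; exact frobNorm_add_le _ _
      _ ≤ fMN * s + s * fMN := add_le_add ht1 ht2
      _ = 2 * s * fMN := by ring
  have hfAB0 : 0 ≤ frobNorm (A - B) := frobNorm_nonneg _
  -- Frobenius bound on D - E
  have hfDE : frobNorm (D - E) ≤ 2 * s * fMN := by
    have h1 : D - E = diagPart (A - B) := by
      rw [hD, hE, diagPart, diagPart, diagPart, diagonal_sub]
      rfl
    rw [h1]
    exact le_trans (frobNorm_diagPart_le _) hfAB
  -- decomposition of the difference of gradients
  have hkey : M * genOmega Ce M - N * genOmega Ce N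
      = (M - N) * genOmega Ce M
        + N * (((A - B) * D + B * (D - E)) - ((D - E) * A + E * (A - B))) := by
    rw [genOmega, genOmega, ← hA, ← hB, ← hD, ← hE]
    noncomm_ring
  -- bound the four inner terms
  have hz1 : frobNorm ((A - B) * D) ≤ (2 * s * fMN) * s := by
    calc frobNorm ((A - B) * D) ≤ frobNorm (A - B) * specNorm D := frob_mul_le_right _ _
      _ ≤ (2 * s * fMN) * s := mul_le_mul hfAB hsD (specNorm_nonneg _)
          (by positivity)
  have hz2 : frobNorm (B * (D - E)) ≤ s * (2 * s * fMN) := by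
    calc frobNorm (B * (D - E)) ≤ specNorm B * frobNorm (D - E) := frob_mul_le_left _ _
      _ ≤ s * (2 * s * fMN) := mul_le_mul hsB hfDE (frobNorm_nonneg _) hs0
  have hz3 : frobNorm ((D - E) * A) ≤ (2 * s * fMN) * s := by
    calc frobNorm ((D - E) * A) ≤ frobNorm (D - E) * specNorm A := frob_mul_le_right _ _
      _ ≤ (2 * s * fMN) * s := mul_le_mul hfDE hsA (specNorm_nonneg _)
          (by positivity)
  have hz4 : frobNorm (E * (A - B)) ≤ s * (2 * s * fMN) := by
    calc frobNorm (E * (A - B)) ≤ specNorm E * frobNorm (A - B) := frob_mul_le_left _ _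
      _ ≤ s * (2 * s * fMN) := mul_le_mul hsE hfAB hfAB0 hs0
  have hZ : frobNorm (((A - B) * D + B * (D - E)) - ((D - E) * A + E * (A - B)))
      ≤ 8 * s ^ 2 * fMN := by
    calc frobNorm (((A - B) * D + B * (D - E)) - ((D - E) * A + E * (A - B)))
        ≤ frobNorm ((A - B) * D + B * (D - E)) + frobNorm ((D - E) * A + E * (A - B)) :=
          frobNorm_sub_le _ _
      _ ≤ (frobNorm ((A - B) * D) + frobNorm (B * (D - E)))
          + (frobNorm ((D - E) * A) + frobNorm (E * (A - B))) :=
          add_le_add (frobNorm_add_le _ _) (frobNorm_add_le _ _)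
      _ ≤ ((2 * s * fMN) * s + s * (2 * s * fMN))
          + ((2 * s * fMN) * s + s * (2 * s * fMN)) :=
          add_le_add (add_le_add hz1 hz2) (add_le_add hz3 hz4)
      _ = 8 * s ^ 2 * fMN := by ring
  -- first term
  have ht1 : frobNorm ((M - N) * genOmega Ce M) ≤ fMN * (2 * s ^ 2) := by
    calc frobNorm ((M - N) * genOmega Ce M)
        ≤ fMN * specNorm (genOmega Ce M) := frob_mul_le_right _ _
      _ ≤ fMN * (2 * s ^ 2) := mul_le_mul_of_nonneg_left hsOm hfMN0
  -- second term
  have ht2 : frobNorm (N * (((A - B) * D + B * (D - E)) - ((D - E) * A + E * (A - B))))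
      ≤ 8 * s ^ 2 * fMN := by
    calc frobNorm (N * (((A - B) * D + B * (D - E)) - ((D - E) * A + E * (A - B))))
        ≤ specNorm N * frobNorm (((A - B) * D + B * (D - E)) - ((D - E) * A + E * (A - B))) :=
          frob_mul_le_left _ _
      _ ≤ 1 * frobNorm (((A - B) * D + B * (D - E)) - ((D - E) * A + E * (A - B))) :=
          mul_le_mul_of_nonneg_right hsN (frobNorm_nonneg _)
      _ = frobNorm (((A - B) * D + B * (D - E)) - ((D - E) * A + E * (A - B))) := one_mul _
      _ ≤ 8 * s ^ 2 * fMN := hZ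
  have hsqrt : 1 ≤ Real.sqrt n := by
    rw [show (1 : ℝ) = Real.sqrt 1 by rw [Real.sqrt_one]]
    exact Real.sqrt_le_sqrt (by exact_mod_cast hn)
  calc frobNorm (M * genOmega Ce M - N * genOmega Ce N)
      ≤ frobNorm ((M - N) * genOmega Ce M)
        + frobNorm (N * (((A - B) * D + B * (D - E)) - ((D - E) * A + E * (A - B)))) := by
        rw [hkey]; exact frobNorm_add_le _ _
    _ ≤ fMN * (2 * s ^ 2) + 8 * s ^ 2 * fMN := add_le_add ht1 ht2
    _ = 10 * s ^ 2 * fMN := by ring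
    _ ≤ (2 * Real.sqrt n + 8) * s ^ 2 * fMN := by
        nlinarith [sq_nonneg s, mul_nonneg (sq_nonneg s) hfMN0]
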